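/- Let Ω ⊂ ℝ³ be a bounded, open, non-empty set and p ∈ (1, ∞). Then for every c > 0 there exists a matrix field P : ℝ³ → ℂ^{3×3} with polynomial entries such that dev sym(Curl P) = 0 identically on ℝ³ while ‖sym(Curl P)‖_{L^p(Ω)} > c·‖P‖_{L^p(Ω)}. (Consequently the seminorms ‖sym Curl · ‖_{L^p(Ω)} and ‖P‖_{L^p(Ω)} + ‖dev sym Curl P‖_{L^p(Ω)} are not equivalent, i.e. W^{1,p}(sym Curl; Ω) ≠ W^{1,p}(dev sym Curl; Ω).) -/

import Mathlib

open Matrix MeasureTheory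

noncomputable section

abbrev V3 := Fin 3 → ℝ
abbrev M3C := Matrix (Fin 3) (Fin 3) ℂ

def symC (X : M3C) : M3C := (1/2 : ℂ) • (X + Xᵀ)
def devC (X : M3C) : M3C := X - ((1/3 : ℂ) * Matrix.trace X) • (1 : M3C)
def AntiC (ξ : Fin 3 → ℂ) : M3C := !![0, -ξ 2, ξ 1; ξ 2, 0, -ξ 0; -ξ 1, ξ 0, 0]
def frobNormC (X : M3C) : ℝ := Real.sqrt (∑ i, ∑ j, ‖X i j‖^2)

def pdC (k : Fin 3) (f : V3 → ℂ) (x : V3) : ℂ := fderiv ℝ f x (Pi.single k 1)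

def CurlC (P : V3 → M3C) (x : V3) : M3C :=
  Matrix.of fun i j =>
    ![pdC 1 (fun y => P y i 2) x - pdC 2 (fun y => P y i 1) x,
      pdC 2 (fun y => P y i 0) x - pdC 0 (fun y => P y i 2) x,
      pdC 0 (fun y => P y i 1) x - pdC 1 (fun y => P y i 0) x] j

def lpC (q : ℝ) (Ω : Set V3) (Q : V3 → M3C) : ℝ := (∫ x in Ω, frobNormC (Q x) ^ q) ^ (1/q)
def lpS (q : ℝ) (Ω : Set V3) (f : V3 → ℂ) : ℝ := (∫ x in Ω, ‖f x‖ ^ q) ^ (1/q)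

namespace S13

def zf (x : V3) : ℂ := (x 0 : ℂ) + (x 1 : ℂ) * Complex.I

lemma zf_continuous : Continuous zf := by
  unfold zf
  fun_prop

def lC : V3 →L[ℝ] ℂ :=
  Complex.ofRealCLM.comp (ContinuousLinearMap.proj 0) +
  Complex.I • Complex.ofRealCLM.comp (ContinuousLinearMap.proj 1)

lemma lC_apply (v : V3) : lC v = (v 0 : ℂ) + (v 1 : ℂ) * Complex.I := by
  simp [lC, mul_comm]

lemma hzf (x : V3) : HasFDerivAt zf lC x := by
  have h := lC.hasFDerivAt (x := x)
  have e : zf = fun y => lC y := by funext y; rw [lC_apply]; rfl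
  rw [e]; exact h

lemma hasF_pow (m : ℕ) (c : ℂ) (x : V3) :
    HasFDerivAt (fun y => c * zf y ^ m) ((c * (m * zf x ^ (m-1))) • lC) x := by
  have hd : HasDerivAt (fun w : ℂ => w ^ m) ((m : ℂ) * zf x ^ (m - 1)) (zf x) :=
    hasDerivAt_pow m (zf x)
  have h1 := (hd.hasFDerivAt.restrictScalars ℝ).comp x (hzf x)
  have h2 : HasFDerivAt (fun y => zf y ^ m) (((m:ℂ) * zf x ^ (m-1)) • lC) x := by
    exact h1.congr_fderiv (ContinuousLinearMap.ext fun v => by simp [mul_comm])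
  have h3 := h2.const_mul c
  exact h3.congr_fderiv (by rw [smul_smul])

def ek : Fin 3 → ℂ := ![1, Complex.I, 0]

lemma lC_single (k : Fin 3) : lC (Pi.single k 1) = ek k := by
  fin_cases k <;> simp [lC_apply, ek, Pi.single_apply]

lemma pd_cpow (m : ℕ) (c : ℂ) (k : Fin 3) (x : V3) :
    pdC k (fun y => c * zf y ^ m) x = c * ((m:ℂ) * zf x ^ (m-1)) * ek k := by
  rw [pdC, (hasF_pow m c x).fderiv]
  simp [lC_single, mul_assoc]

def Cmat : M3C := !![0,0,-Complex.I; 0,0,-1; 0,1,0]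
def Pmat (n : ℕ) (x : V3) : M3C := zf x ^ (n+1) • Cmat

lemma pd_entry (n : ℕ) (i j k : Fin 3) (x : V3) :
    pdC k (fun y => Pmat n y i j) x = Cmat i j * (((n:ℂ)+1) * zf x ^ n) * ek k := by
  have e : (fun y => Pmat n y i j) = fun y => Cmat i j * zf y ^ (n+1) := by
    funext y; simp [Pmat, Matrix.smul_apply, mul_comm]
  rw [e, pd_cpow]
  push_cast
  simp

def M0 : M3C := !![1,Complex.I,0; -Complex.I,1,0; 0,0,1]

lemma curl_P (n : ℕ) (x : V3) :
    CurlC (Pmat n) x = (((n:ℂ)+1) * zf x ^ n) • M0 := by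
  ext i j
  fin_cases i <;> fin_cases j <;>
      simp [CurlC, pd_entry, ek, Cmat, M0, Matrix.smul_apply] <;>
    ring_nf <;> simp [Complex.I_sq] <;> ring_nf

lemma symC_smul (a : ℂ) (X : M3C) : symC (a • X) = a • symC X := by
  ext i j
  simp [symC, Matrix.smul_apply, Matrix.add_apply, Matrix.transpose_apply]
  ring

lemma M0_transpose : M0ᵀ = !![1,-Complex.I,0; Complex.I,1,0; 0,0,1] := by
  ext i j
  fin_cases i <;> fin_cases j <;> simp [M0, Matrix.transpose_apply] <;> rfl

lemma symC_M0 : symC M0 = 1 := by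
  unfold symC
  rw [M0_transpose]
  ext i j
  fin_cases i <;> fin_cases j <;>
    simp [M0, Matrix.smul_apply, Matrix.add_apply, Matrix.one_apply, Matrix.vecHead, Matrix.vecTail]
  all_goals first | ring | rfl

lemma sym_curl (n : ℕ) (x : V3) :
    symC (CurlC (Pmat n) x) = (((n:ℂ)+1) * zf x ^ n) • (1 : M3C) := by
  rw [curl_P, symC_smul, symC_M0]

lemma dev_smul_one (a : ℂ) : devC (a • (1 : M3C)) = 0 := by
  ext i j
  fin_cases i <;> fin_cases j <;>
    simp [devC, Matrix.sub_apply, Matrix.smul_apply, Matrix.one_apply, Matrix.trace,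
      Matrix.diag, Fin.sum_univ_three] <;> ring

lemma frob_smul_one (a : ℂ) : frobNormC (a • (1 : M3C)) = Real.sqrt 3 * ‖a‖ := by
  have e : (∑ i, ∑ j, ‖(a • (1:M3C)) i j‖^2) = 3 * ‖a‖^2 := by
    simp [Fin.sum_univ_three, Matrix.smul_apply, Matrix.one_apply]
    ring
  rw [frobNormC, e, Real.sqrt_mul (by norm_num), Real.sqrt_sq (norm_nonneg a)]

lemma frob_P (n : ℕ) (x : V3) : frobNormC (Pmat n x) = Real.sqrt 3 * ‖zf x‖^(n+1) := by
  have e : (∑ i, ∑ j, ‖(Pmat n x) i j‖^2) = 3 * (‖zf x‖^(n+1))^2 := by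
    simp [Pmat, Cmat, Fin.sum_univ_three, Matrix.smul_apply, norm_pow]
    ring
  rw [frobNormC, e, Real.sqrt_mul (by norm_num), Real.sqrt_sq (by positivity)]

lemma frob_symcurl (n : ℕ) (x : V3) :
    frobNormC (symC (CurlC (Pmat n) x)) = ((n:ℝ)+1) * (Real.sqrt 3 * ‖zf x‖^n) := by
  rw [sym_curl, frob_smul_one]
  rw [norm_mul, norm_pow]
  have : ‖((n:ℂ)+1)‖ = (n:ℝ)+1 := by
    rw [show ((n:ℂ)+1) = ((n+1 : ℕ) : ℂ) by push_cast; ring, Complex.norm_natCast]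
    push_cast; ring
  rw [this]; ring

def gg (x : V3) : ℝ := ‖zf x‖
def hh (n : ℕ) (x : V3) : ℝ := Real.sqrt 3 * gg x ^ n

lemma gg_cont : Continuous gg := zf_continuous.norm
lemma gg_nonneg (x : V3) : 0 ≤ gg x := norm_nonneg _
lemma hh_cont (n : ℕ) : Continuous (hh n) := continuous_const.mul (gg_cont.pow n)
lemma hh_nonneg (n : ℕ) (x : V3) : 0 ≤ hh n x :=
  mul_nonneg (Real.sqrt_nonneg 3) (pow_nonneg (gg_nonneg x) n)

lemma frob_P' (n : ℕ) (x : V3) : frobNormC (Pmat n x) = gg x * hh n x := by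
  rw [frob_P]; unfold hh gg; ring

lemma frob_symcurl' (n : ℕ) (x : V3) :
    frobNormC (symC (CurlC (Pmat n) x)) = ((n:ℝ)+1) * hh n x := by
  rw [frob_symcurl]; rfl

lemma frob_nonneg (X : M3C) : 0 ≤ frobNormC X := Real.sqrt_nonneg _

lemma integrableOn_of_continuous {f : V3 → ℝ} (hf : Continuous f) {Ω : Set V3}
    (hb : Bornology.IsBounded Ω) : IntegrableOn f Ω := by
  have hc : IsCompact (closure Ω) :=
    Metric.isCompact_of_isClosed_isBounded isClosed_closure hb.closure
  exact (hf.continuousOn.integrableOn_compact hc).mono_set subset_closure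

end S13

/-- for Ω ⊂ ℝ³ bounded open nonempty and p ∈ (1,∞), for every
c > 0 there exists a matrix field P with polynomial entries such that
dev sym Curl P ≡ 0 on ℝ³ while ‖sym Curl P‖_{L^p(Ω)} > c ‖P‖_{L^p(Ω)};
hence W^{1,p}(sym Curl; Ω) ≠ W^{1,p}(dev sym Curl; Ω). -/
theorem stmt13 (Ω : Set V3) (hΩo : IsOpen Ω) (hΩb : Bornology.IsBounded Ω)
    (hΩne : Ω.Nonempty) (p : ℝ) (hp : 1 < p) (c : ℝ) (hc : 0 < c) :
    ∃ P : V3 → M3C,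
      (∀ i j, ∃ q : MvPolynomial (Fin 3) ℂ,
        ∀ x, P x i j = MvPolynomial.eval (fun k => ((x k : ℝ) : ℂ)) q) ∧
      (∀ x, devC (symC (CurlC P x)) = 0) ∧
      c * lpC p Ω P < lpC p Ω (fun x => symC (CurlC P x)) := by
  classical
  have hp0 : (0:ℝ) < p := lt_trans one_pos hp
  -- bound on Ω
  obtain ⟨R', hR'⟩ := hΩb.subset_closedBall 0
  set R : ℝ := 2 * max R' 0 + 1 with hRdef
  have hRpos : (0:ℝ) < R := by positivity
  have hgle : ∀ x ∈ Ω, ‖S13.zf x‖ ≤ R := by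
    intro x hx
    have hxball := hR' hx
    rw [Metric.mem_closedBall, dist_zero_right] at hxball
    have h0 : |x 0| ≤ ‖x‖ := by
      have := norm_le_pi_norm x 0; simpa using this
    have h1 : |x 1| ≤ ‖x‖ := by
      have := norm_le_pi_norm x 1; simpa using this
    have : ‖S13.zf x‖ ≤ |x 0| + |x 1| := by
      unfold S13.zf
      refine le_trans (norm_add_le _ _) ?_
      simp [Complex.norm_real]
    have hxR : ‖x‖ ≤ max R' 0 := le_trans hxball (le_max_left _ _)
    calc ‖S13.zf x‖ ≤ |x 0| + |x 1| := this
      _ ≤ ‖x‖ + ‖x‖ := add_le_add h0 h1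
      _ ≤ max R' 0 + max R' 0 := add_le_add hxR hxR
      _ ≤ R := by rw [hRdef]; ring_nf; linarith
  set n : ℕ := ⌈c * R⌉₊ with hndef
  have hcRn : c * R < (n:ℝ) + 1 := lt_of_le_of_lt (Nat.le_ceil _) (by exact_mod_cast Nat.lt_succ_self n)
  refine ⟨S13.Pmat n, ?_, ?_, ?_⟩
  · -- polynomial entries
    intro i j
    refine ⟨MvPolynomial.C (S13.Cmat i j) *
      (MvPolynomial.X 0 + MvPolynomial.C Complex.I * MvPolynomial.X 1)^(n+1), ?_⟩
    intro x
    simp [S13.Pmat, S13.zf, Matrix.smul_apply, MvPolynomial.eval_mul, MvPolynomial.eval_pow]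
    ring
  · intro x
    rw [S13.sym_curl]
    exact S13.dev_smul_one _
  · -- the norm inequality
    have hgcont := S13.gg_cont
    have hhcont := S13.hh_cont n
    have hhnn := S13.hh_nonneg n
    have hggnn := S13.gg_nonneg
    -- integrability
    have hintP : IntegrableOn (fun x => frobNormC (S13.Pmat n x) ^ p) Ω := by
      refine S13.integrableOn_of_continuous ?_ hΩb
      refine Continuous.rpow_const ?_ (fun x => Or.inr hp0.le)
      simp_rw [S13.frob_P']
      exact hgcont.mul hhcont
    have hinth : IntegrableOn (fun x => S13.hh n x ^ p) Ω :=
      S13.integrableOn_of_continuous (hhcont.rpow_const (fun x => Or.inr hp0.le)) hΩb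
    set J : ℝ := ∫ x in Ω, S13.hh n x ^ p with hJdef
    have hJnn : 0 ≤ J := integral_nonneg (fun x => Real.rpow_nonneg (hhnn x) p)
    -- positivity of J
    have hJpos : 0 < J := by
      obtain ⟨x0, hx0⟩ := hΩne
      obtain ⟨δ, hδ, hball⟩ := Metric.isOpen_iff.1 hΩo x0 hx0
      obtain ⟨y, hyΩ, hyz⟩ : ∃ y ∈ Ω, S13.zf y ≠ 0 := by
        by_cases hz : S13.zf x0 = 0
        · refine ⟨Function.update x0 0 (x0 0 + δ/2), ?_, ?_⟩
          · apply hball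
            rw [Metric.mem_ball]
            have hle : dist (Function.update x0 0 (x0 0 + δ/2)) x0 ≤ δ/2 := by
              rw [dist_pi_le_iff (by linarith)]
              intro i
              by_cases hi : i = 0
              · subst hi
                rw [Function.update_self, Real.dist_eq]
                have e2 : x0 0 + δ/2 - x0 0 = δ/2 := by ring
                rw [e2, abs_of_pos (by linarith)]
              · rw [Function.update_of_ne hi]
                simp
                linarith
            linarith
          · have e : S13.zf (Function.update x0 0 (x0 0 + δ/2)) = S13.zf x0 + ((δ/2 : ℝ) : ℂ) := by
              unfold S13.zf
              rw [Function.update_self, Function.update_of_ne (by norm_num)]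
              push_cast; ring
            rw [e, hz, zero_add]
            simp only [ne_eq, Complex.ofReal_eq_zero]
            linarith
        · exact ⟨x0, hx0, hz⟩
      set m : ℝ := ‖S13.zf y‖ with hmdef
      have hm : 0 < m := norm_pos_iff.2 hyz
      set U : Set V3 := Ω ∩ (S13.gg ⁻¹' Set.Ioi (m/2)) with hUdef
      have hUopen : IsOpen U := hΩo.inter (isOpen_Ioi.preimage hgcont)
      have hyU : y ∈ U := by
        refine ⟨hyΩ, ?_⟩
        have : m/2 < S13.gg y := by
          unfold S13.gg
          rw [← hmdef]
          linarith
        exact this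
      obtain ⟨ε, hε, hεball⟩ := Metric.isOpen_iff.1 hUopen y hyU
      set κ : ℝ := (Real.sqrt 3 * (m/2)^n) ^ p with hκdef
      have hκpos : 0 < κ := Real.rpow_pos_of_pos (by positivity) p
      have hsub : Metric.ball y ε ⊆ Ω := fun x hx => (hεball hx).1
      have hlow : ∀ x ∈ Metric.ball y ε, κ ≤ S13.hh n x ^ p := by
        intro x hx
        have hgx : m/2 < S13.gg x := (hεball hx).2
        have hle : Real.sqrt 3 * (m/2)^n ≤ S13.hh n x := by
          unfold S13.hh
          have : (m/2)^n ≤ S13.gg x ^ n := pow_le_pow_left₀ (by linarith) hgx.le n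
          nlinarith [Real.sqrt_nonneg 3]
        exact Real.rpow_le_rpow (by positivity) hle hp0.le
      have h1 : ∫ x in Metric.ball y ε, κ ≤ ∫ x in Metric.ball y ε, S13.hh n x ^ p := by
        refine setIntegral_mono_on (integrableOn_const measure_ball_lt_top.ne)
          (hinth.mono_set hsub) measurableSet_ball hlow
      have h2 : (0:ℝ) < ∫ x in Metric.ball y ε, κ := by
        rw [setIntegral_const, smul_eq_mul]
        have hb1 : 0 < (volume (Metric.ball y ε)).toReal :=
          ENNReal.toReal_pos (Metric.measure_ball_pos volume y hε).ne' measure_ball_lt_top.ne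
        positivity
      have h3 : ∫ x in Metric.ball y ε, S13.hh n x ^ p ≤ J := by
        refine setIntegral_mono_set hinth ?_ hsub.eventuallyLE
        exact Filter.Eventually.of_forall (fun x => Real.rpow_nonneg (hhnn x) p)
      linarith
    have hJp : 0 < J ^ (1/p) := Real.rpow_pos_of_pos hJpos _
    have hpinv : p * (1/p) = 1 := by field_simp
    have hrp : ∀ a : ℝ, 0 ≤ a → (a ^ p * J) ^ (1/p) = a * J ^ (1/p) := by
      intro a ha
      rw [Real.mul_rpow (Real.rpow_nonneg ha p) hJnn, ← Real.rpow_mul ha, hpinv, Real.rpow_one]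
    -- lpC values
    have hlpS : lpC p Ω (fun x => symC (CurlC (S13.Pmat n) x)) = ((n:ℝ)+1) * J ^ (1/p) := by
      rw [lpC]
      have e1 : ∀ x : V3, frobNormC (symC (CurlC (S13.Pmat n) x)) ^ p
          = ((n:ℝ)+1)^p * S13.hh n x ^ p := by
        intro x
        rw [S13.frob_symcurl', Real.mul_rpow (by positivity) (hhnn x)]
      simp_rw [e1]
      rw [integral_const_mul, hrp _ (by positivity)]
    have hlpP : lpC p Ω (S13.Pmat n) ≤ R * J ^ (1/p) := by
      rw [lpC]
      have e1 : ∀ x ∈ Ω, frobNormC (S13.Pmat n x) ^ p ≤ R^p * S13.hh n x ^ p := by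
        intro x hx
        rw [S13.frob_P', ← Real.mul_rpow hRpos.le (hhnn x)]
        refine Real.rpow_le_rpow (mul_nonneg (hggnn x) (hhnn x)) ?_ hp0.le
        have hgR : S13.gg x ≤ R := hgle x hx
        nlinarith [hhnn x, hggnn x]
      have h4 : (∫ x in Ω, frobNormC (S13.Pmat n x) ^ p) ≤ R^p * J := by
        calc (∫ x in Ω, frobNormC (S13.Pmat n x) ^ p)
            ≤ ∫ x in Ω, R^p * S13.hh n x ^ p :=
              setIntegral_mono_on hintP (hinth.const_mul _) hΩo.measurableSet e1
          _ = R^p * J := by rw [integral_const_mul]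
      calc (∫ x in Ω, frobNormC (S13.Pmat n x) ^ p) ^ (1/p)
          ≤ (R^p * J) ^ (1/p) := by
            refine Real.rpow_le_rpow ?_ h4 (by positivity)
            exact integral_nonneg (fun x => Real.rpow_nonneg (S13.frob_nonneg _) p)
        _ = R * J ^ (1/p) := hrp R hRpos.le
    rw [hlpS]
    calc c * lpC p Ω (S13.Pmat n) ≤ c * (R * J ^ (1/p)) :=
          mul_le_mul_of_nonneg_left hlpP hc.le
      _ = (c * R) * J ^ (1/p) := by ring
      _ < ((n:ℝ)+1) * J ^ (1/p) := mul_lt_mul_of_pos_right hcRn hJp
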